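/- Let A be a unital C*-algebra, τ a continuous linear functional that is tracial, positive, and faithful, and δ₁, δ₂, δ₃, δ₄ continuous ℂ-linear τ-invariant *-derivations (δᵢ(x*) = (δᵢ(x))*). For self-adjoint h ∈ A define R := π² Σᵢ₌₁⁴ ( −e^{−h}·δᵢ(δᵢ(e^h))·e^{−h} + (3/2)·e^{−h}·δᵢ(e^h)·e^{−h}·δᵢ(e^h)·e^{−h} ). Then τ(R) is a nonpositive real number, and τ(R) = 0 if and only if δᵢ(e^h) = 0 for all i = 1, …, 4. -/

import Mathlib

open NormedSpace ComplexOrder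

/-- **Non-positivity of the Einstein–Hilbert action for the Fathizadeh–Khalkhali scalar
curvature on the noncommutative 4-torus.**  For the scalar curvature
`R = π² Σᵢ(−e^{−h}δᵢ²(e^h)e^{−h} + (3/2)e^{−h}δᵢ(e^h)e^{−h}δᵢ(e^h)e^{−h})`,
the Einstein–Hilbert action `τ(R)` is a nonpositive real number, vanishing iff
`δᵢ(e^h) = 0` for all `i`. -/
theorem stmt_4 {A : Type*} [NormedRing A] [StarRing A] [CStarRing A]
    [NormedAlgebra ℂ A] [CompleteSpace A] [StarModule ℂ A]
    (τ : A →L[ℂ] ℂ) (hτ : ∀ x y : A, τ (x * y) = τ (y * x))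
    (hpos : ∀ x : A, 0 ≤ τ (star x * x))
    (hfaithful : ∀ x : A, τ (star x * x) = 0 → x = 0)
    (D : Fin 4 → A →L[ℂ] A)
    (hD : ∀ i, ∀ x y : A, D i (x * y) = D i x * y + x * D i y)
    (hτD : ∀ i, ∀ x : A, τ (D i x) = 0)
    (hDstar : ∀ i, ∀ x : A, D i (star x) = star (D i x))
    (h : A) (hh : IsSelfAdjoint h) :
    let R : A := ((Real.pi : ℂ) ^ 2) • ∑ i : Fin 4,
      (-(NormedSpace.exp (-h) * D i (D i (NormedSpace.exp h)) * NormedSpace.exp (-h))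
        + (3/2 : ℂ) • (NormedSpace.exp (-h) * D i (NormedSpace.exp h) * NormedSpace.exp (-h) * D i (NormedSpace.exp h) * NormedSpace.exp (-h)))
    τ R ≤ 0 ∧ (τ R = 0 ↔ ∀ i : Fin 4, D i (NormedSpace.exp h) = 0) := by
  intro R
  set u := NormedSpace.exp h with hu
  set w := NormedSpace.exp (-h) with hwdef
  set v := NormedSpace.exp ((-(2:ℂ)⁻¹) • h) with hvdef
  set v' := NormedSpace.exp (((2:ℂ)⁻¹) • h) with hv'def
  have hwu : w * u = 1 := by
    let +nondep : NormedAlgebra ℚ A := .restrictScalars ℚ ℂ A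
    rw [hwdef, hu, ← exp_add_of_commute ((Commute.refl h).neg_left), neg_add_cancel, exp_zero]
  have huw : u * w = 1 := by
    let +nondep : NormedAlgebra ℚ A := .restrictScalars ℚ ℂ A
    rw [hwdef, hu, ← exp_add_of_commute ((Commute.refl h).neg_right), add_neg_cancel, exp_zero]
  have hvv : v * v = w := by
    let +nondep : NormedAlgebra ℚ A := .restrictScalars ℚ ℂ A
    rw [hvdef, hwdef, ← exp_add_of_commute (Commute.refl _), ← add_smul]
    norm_num
  have hvv' : v * v' = 1 := by
    let +nondep : NormedAlgebra ℚ A := .restrictScalars ℚ ℂ A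
    rw [hvdef, hv'def, ← exp_add_of_commute (((Commute.refl h).smul_left _).smul_right _),
      ← add_smul]
    norm_num
  have hsh : star h = h := hh
  have hsu : star u = u := by rw [hu, star_exp, hsh]
  have hsw : star w = w := by rw [hwdef, star_exp, star_neg, hsh]
  have hsv : star v = v := by
    rw [hvdef, star_exp, star_smul, hsh]
    norm_num
  have hD1 : ∀ i, D i (1 : A) = 0 := by
    intro i
    have h1 := hD i 1 1
    simp only [mul_one, one_mul] at h1
    exact left_eq_add.mp h1
  have hDw : ∀ i, D i w = -(w * D i u * w) := by
    intro i
    have h0 : D i w * u + w * D i u = 0 := by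
      rw [← hD i w u, hwu, hD1]
    have h2 : D i w * u = -(w * D i u) := eq_neg_of_add_eq_zero_left h0
    calc D i w = D i w * (u * w) := by rw [huw, mul_one]
      _ = (D i w * u) * w := by rw [mul_assoc]
      _ = -(w * D i u * w) := by rw [h2, neg_mul]
  -- the key identity for each direction
  have key : ∀ i : Fin 4,
      τ (-(w * D i (D i u) * w) + (3/2 : ℂ) • (w * D i u * w * D i u * w))
        = -((2:ℂ)⁻¹ * τ (star (w * D i u * v) * (w * D i u * v))) := by
    intro i
    have hsa : star (D i u) = D i u := by rw [← hDstar i u, hsu]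
    have eA : τ (w * D i (D i u) * w) = τ (w * (w * D i (D i u))) := hτ (w * D i (D i u)) w
    have hz : τ (D i (w * (w * D i u))) = 0 := hτD i _
    rw [hD i w (w * D i u), hD i w (D i u), hDw i] at hz
    simp only [mul_add, map_add, neg_mul, mul_neg, map_neg, mul_assoc] at hz
    have e2 : τ (w * (D i u * (w * (w * D i u)))) = τ (w * (w * (D i u * (w * D i u)))) := by
      have := hτ (w * D i u) (w * (w * D i u))
      simpa [mul_assoc] using this
    have e3 : τ (w * D i u * w * D i u * w) = τ (w * (w * (D i u * (w * D i u)))) := by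
      have := hτ (w * D i u * w * D i u) w
      simpa [mul_assoc] using this
    have eT : τ (star (w * D i u * v) * (w * D i u * v))
        = τ (w * (w * (D i u * (w * D i u)))) := by
      have h1 : star (w * D i u * v) * (w * D i u * v)
          = v * (D i u * (w * (w * (D i u * v)))) := by
        simp [star_mul, hsa, hsw, hsv, mul_assoc]
      rw [h1, hτ v (D i u * (w * (w * (D i u * v))))]
      have h2 : (D i u * (w * (w * (D i u * v)))) * v
          = D i u * (w * (w * (D i u * (v * v)))) := by
        simp only [mul_assoc]
      rw [h2, hvv, hτ (D i u) (w * (w * (D i u * w)))]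
      simp only [mul_assoc]
    simp only [map_add, map_neg, map_smul, smul_eq_mul]
    simp only [mul_assoc] at eA e3 eT ⊢
    linear_combination -eA - hz - e2 + (3/2 : ℂ) * e3 + (2:ℂ)⁻¹ * eT
  have hR : R = ((Real.pi : ℂ) ^ 2) • ∑ i : Fin 4,
      (-(w * D i (D i u) * w) + (3/2 : ℂ) • (w * D i u * w * D i u * w)) := rfl
  have hτR : τ R = -(((Real.pi : ℂ) ^ 2 * 2⁻¹)
      * ∑ i : Fin 4, τ (star (w * D i u * v) * (w * D i u * v))) := by
    rw [hR, map_smul, map_sum, smul_eq_mul]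
    rw [Finset.sum_congr rfl fun i _ => key i]
    rw [Finset.sum_neg_distrib, ← Finset.mul_sum]
    ring
  have hπ : (0:ℂ) < (Real.pi : ℂ) ^ 2 * 2⁻¹ := by
    have hcast : (Real.pi : ℂ) ^ 2 * 2⁻¹ = ((Real.pi ^ 2 * 2⁻¹ : ℝ) : ℂ) := by push_cast; ring
    rw [hcast, Complex.zero_lt_real]
    positivity
  have hsum_nn : 0 ≤ ∑ i : Fin 4, τ (star (w * D i u * v) * (w * D i u * v)) :=
    Finset.sum_nonneg fun i _ => hpos _
  refine ⟨?_, ?_, ?_⟩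
  · rw [hτR]
    exact neg_nonpos_of_nonneg (mul_nonneg hπ.le hsum_nn)
  · -- τ R = 0 → all D i u = 0
    intro h0
    rw [hτR, neg_eq_zero] at h0
    have hs0 : ∑ i : Fin 4, τ (star (w * D i u * v) * (w * D i u * v)) = 0 :=
      (mul_eq_zero.mp h0).resolve_left (ne_of_gt hπ)
    intro i
    have hTi : τ (star (w * D i u * v) * (w * D i u * v)) = 0 :=
      (Finset.sum_eq_zero_iff_of_nonneg fun j _ => hpos _).mp hs0 i (Finset.mem_univ i)
    have hci : w * D i u * v = 0 := hfaithful _ hTi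
    have hrec : D i u = u * (w * D i u * v) * v' := by
      calc D i u = (u * w) * D i u * (v * v') := by rw [huw, hvv', one_mul, mul_one]
        _ = u * (w * D i u * v) * v' := by simp only [mul_assoc]
    rw [hrec, hci, mul_zero, zero_mul]
  · -- all D i u = 0 → τ R = 0
    intro hDi0
    rw [hτR]
    have : ∀ i ∈ Finset.univ, τ (star (w * D i u * v) * (w * D i u * v)) = 0 := by
      intro i _
      rw [hDi0 i, mul_zero, zero_mul, star_zero, zero_mul, map_zero]
    rw [Finset.sum_eq_zero this, mul_zero, neg_zero]
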